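/- arXiv:math/0003016 — 2 statements merged into one kernel-verified Lean document; each statement's English description precedes it below -/
import Mathlib

section
/- Let k be a field and let p, q ∈ k[x, y] be coprime homogeneous polynomials of degrees d and e respectively, with d, e ≥ 1. Then for every homogeneous polynomial f of degree d + e − 1 there exist unique homogeneous polynomials a of degree e − 1 and b of degree d − 1 such that f = a·p + b·q. -/
open MvPolynomial

/-- A homogeneous polynomial of degree `n` divisible by a homogeneous polynomial of
degree `e > n` must vanish. -/
lemma hom_dvd_eq_zero {σ R : Type*} [CommRing R] {q a : MvPolynomial σ R}
    {e n : ℕ} (hq : q.IsHomogeneous e) (ha : a.IsHomogeneous n) (h : n < e)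
    (hdvd : q ∣ a) : a = 0 := by
  obtain ⟨c, rfl⟩ := hdvd
  have key : q * c = ∑ j ∈ Finset.range (c.totalDegree + 1),
      q * homogeneousComponent j c := by
    rw [← Finset.mul_sum, sum_homogeneousComponent]
  calc q * c = homogeneousComponent n (q * c) :=
        ((homogeneousComponent_of_mem
          ((mem_homogeneousSubmodule _ _).2 ha)).trans (if_pos rfl)).symm
    _ = 0 := by
        rw [key, map_sum]
        refine Finset.sum_eq_zero fun j _ => ?_
        rw [homogeneousComponent_of_mem ((mem_homogeneousSubmodule _ _).2
          (hq.mul (homogeneousComponent_isHomogeneous j c))), if_neg (by omega)]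

lemma degree_fin2 (d : Fin 2 →₀ ℕ) : d.degree = d 0 + d 1 := by
  rw [Finsupp.degree_apply, Finset.sum_subset (Finset.subset_univ d.support)
    (fun i _ hi => Finsupp.notMem_support_iff.mp hi), Fin.sum_univ_two]

/-- The degree-`n` exponents in two variables are in bijection with `Fin (n+1)`. -/
noncomputable def fin2DegreeEquiv (n : ℕ) : Fin (n + 1) ≃ {d : Fin 2 →₀ ℕ | Finsupp.degree d = n} where
  toFun i := ⟨Finsupp.single 0 (i : ℕ) + Finsupp.single 1 (n - (i : ℕ)), by
    have hi := i.isLt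
    simp only [Set.mem_setOf_eq, degree_fin2, Finsupp.add_apply, Finsupp.single_apply]
    simp only [Fin.isValue, if_true, if_pos rfl]
    norm_num
    omega⟩
  invFun d := ⟨d.1 0, by
    have h := d.2
    simp only [Set.mem_setOf_eq, degree_fin2] at h
    omega⟩
  left_inv i := by
    ext
    simp [Finsupp.single_apply]
  right_inv d := by
    have h := d.2
    simp only [Set.mem_setOf_eq, degree_fin2] at h
    ext j
    simp only
    fin_cases j <;> simp [Finsupp.single_apply] <;> omega

/-- The space of binary forms of degree `n` is linearly equivalent to `k^{n+1}`. -/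
noncomputable def homogeneousSubmoduleFin2Equiv (k : Type*) [Field k] (n : ℕ) :
    (homogeneousSubmodule (Fin 2) k n) ≃ₗ[k] (Fin (n + 1) → k) :=
  (LinearEquiv.ofEq _ _ (homogeneousSubmodule_eq_finsupp_supported (Fin 2) k n)) ≪≫ₗ
    (AddMonoidAlgebra.supportedEquivFinsupp _) ≪≫ₗ
    (Finsupp.domLCongr (fin2DegreeEquiv n).symm) ≪≫ₗ
    (Finsupp.linearEquivFunOnFinite k k (Fin (n + 1)))

lemma finrank_homogeneousSubmodule_fin2 (k : Type*) [Field k] (n : ℕ) :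
    Module.finrank k (homogeneousSubmodule (Fin 2) k n) = n + 1 := by
  rw [(homogeneousSubmoduleFin2Equiv k n).finrank_eq, Module.finrank_fin_fun]

instance (k : Type*) [Field k] (n : ℕ) :
    FiniteDimensional k (homogeneousSubmodule (Fin 2) k n) :=
  LinearEquiv.finiteDimensional (homogeneousSubmoduleFin2Equiv k n).symm

/-- Koszul decomposition for coprime binary forms: if `p, q ∈ k[x,y]` are coprime
homogeneous of degrees `d, e ≥ 1` (coprime in the sense that any common divisor is a
unit), then every homogeneous `f` of degree `d + e − 1` is uniquely `a·p + b·q` with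
`a` homogeneous of degree `e − 1` and `b` homogeneous of degree `d − 1`. -/
theorem koszul_decomposition_binary_forms (k : Type*) [Field k]
    (p q : MvPolynomial (Fin 2) k) (d e : ℕ) (hd : 1 ≤ d) (he : 1 ≤ e)
    (hp : p.IsHomogeneous d) (hq : q.IsHomogeneous e)
    (hcop : ∀ r : MvPolynomial (Fin 2) k, r ∣ p → r ∣ q → IsUnit r)
    (f : MvPolynomial (Fin 2) k) (hf : f.IsHomogeneous (d + e - 1)) :
    ∃! ab : MvPolynomial (Fin 2) k × MvPolynomial (Fin 2) k,
      ab.1.IsHomogeneous (e - 1) ∧ ab.2.IsHomogeneous (d - 1) ∧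
        f = ab.1 * p + ab.2 * q := by
  classical
  -- q is nonzero
  have hq0 : q ≠ 0 := by
    intro h0
    have hu : IsUnit p := hcop p dvd_rfl (h0 ▸ dvd_zero p)
    have h1 : (1 : MvPolynomial (Fin 2) k) = 0 :=
      hom_dvd_eq_zero hp (isHomogeneous_one _ _) (by omega) (isUnit_iff_dvd_one.mp hu)
    exact one_ne_zero h1
  -- key uniqueness/injectivity fact
  have huniq : ∀ a b : MvPolynomial (Fin 2) k, a.IsHomogeneous (e - 1) →
      b.IsHomogeneous (d - 1) → a * p + b * q = 0 → a = 0 ∧ b = 0 := by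
    intro a b ha hb h
    have hrel : IsRelPrime q p := fun r h1 h2 => hcop r h2 h1
    have hdvd : q ∣ a * p := ⟨-b, by linear_combination h⟩
    have hqa : q ∣ a := hrel.dvd_of_dvd_mul_right hdvd
    have ha0 : a = 0 := hom_dvd_eq_zero hq ha (by omega) hqa
    refine ⟨ha0, ?_⟩
    have : b * q = 0 := by rw [ha0] at h; simpa using h
    rcases mul_eq_zero.mp this with hb0 | h0
    · exact hb0
    · exact absurd h0 hq0
  -- the Koszul linear map
  have mem1 : ∀ (ab : (homogeneousSubmodule (Fin 2) k (e - 1)) ×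
      (homogeneousSubmodule (Fin 2) k (d - 1))),
      ((ab.1 : MvPolynomial (Fin 2) k) * p + (ab.2 : MvPolynomial (Fin 2) k) * q)
        ∈ homogeneousSubmodule (Fin 2) k (d + e - 1) := by
    intro ab
    rw [mem_homogeneousSubmodule]
    have h1 : ((ab.1 : MvPolynomial (Fin 2) k) * p).IsHomogeneous (d + e - 1) := by
      have := ((mem_homogeneousSubmodule _ _).1 ab.1.2).mul hp
      convert this using 1; omega
    have h2 : ((ab.2 : MvPolynomial (Fin 2) k) * q).IsHomogeneous (d + e - 1) := by
      have := ((mem_homogeneousSubmodule _ _).1 ab.2.2).mul hq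
      convert this using 1; omega
    exact h1.add h2
  let φ : ((homogeneousSubmodule (Fin 2) k (e - 1)) ×
      (homogeneousSubmodule (Fin 2) k (d - 1))) →ₗ[k]
      (homogeneousSubmodule (Fin 2) k (d + e - 1)) :=
    { toFun := fun ab => ⟨(ab.1 : MvPolynomial (Fin 2) k) * p +
        (ab.2 : MvPolynomial (Fin 2) k) * q, mem1 ab⟩
      map_add' := fun x y => by
        apply Subtype.ext
        simp only [Prod.fst_add, Prod.snd_add, Submodule.coe_add, AddSubmonoid.coe_add]
        ring
      map_smul' := fun c x => by
        apply Subtype.ext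
        simp only [Prod.smul_fst, Prod.smul_snd, SetLike.val_smul, smul_eq_C_mul,
          RingHom.id_apply]
        ring }
  have hinj : Function.Injective φ := by
    rw [← LinearMap.ker_eq_bot, LinearMap.ker_eq_bot']
    intro ab hab
    have h0 : (ab.1 : MvPolynomial (Fin 2) k) * p + (ab.2 : MvPolynomial (Fin 2) k) * q = 0 := by
      have := congrArg (Subtype.val) hab
      simpa [φ] using this
    obtain ⟨h1, h2⟩ := huniq _ _ ((mem_homogeneousSubmodule _ _).1 ab.1.2)
      ((mem_homogeneousSubmodule _ _).1 ab.2.2) h0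
    have e1 : ab.1 = 0 := Subtype.ext (by simpa using h1)
    have e2 : ab.2 = 0 := Subtype.ext (by simpa using h2)
    exact Prod.ext e1 e2
  have hdim : Module.finrank k ((homogeneousSubmodule (Fin 2) k (e - 1)) ×
      (homogeneousSubmodule (Fin 2) k (d - 1))) =
      Module.finrank k (homogeneousSubmodule (Fin 2) k (d + e - 1)) := by
    rw [Module.finrank_prod, finrank_homogeneousSubmodule_fin2,
      finrank_homogeneousSubmodule_fin2, finrank_homogeneousSubmodule_fin2]
    omega
  have hsurj : Function.Surjective φ :=
    (LinearMap.injective_iff_surjective_of_finrank_eq_finrank hdim).mp hinj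
  obtain ⟨ab, hab⟩ := hsurj ⟨f, (mem_homogeneousSubmodule _ _).2 hf⟩
  have habval : (ab.1 : MvPolynomial (Fin 2) k) * p + (ab.2 : MvPolynomial (Fin 2) k) * q = f := by
    have := congrArg (Subtype.val) hab
    simpa [φ] using this
  refine ⟨((ab.1 : MvPolynomial (Fin 2) k), (ab.2 : MvPolynomial (Fin 2) k)),
    ⟨(mem_homogeneousSubmodule _ _).1 ab.1.2,
     (mem_homogeneousSubmodule _ _).1 ab.2.2, habval.symm⟩, ?_⟩
  rintro ⟨a', b'⟩ ⟨ha', hb', heq⟩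
  have hz : (a' - (ab.1 : MvPolynomial (Fin 2) k)) * p +
      (b' - (ab.2 : MvPolynomial (Fin 2) k)) * q = 0 := by
    have := heq.symm.trans habval.symm
    ring_nf
    linear_combination this
  obtain ⟨h1, h2⟩ := huniq _ _ (ha'.sub ((mem_homogeneousSubmodule _ _).1 ab.1.2))
    (hb'.sub ((mem_homogeneousSubmodule _ _).1 ab.2.2)) hz
  have e1 : a' = (ab.1 : MvPolynomial (Fin 2) k) := by
    have := sub_eq_zero.mp h1; exact this
  have e2 : b' = (ab.2 : MvPolynomial (Fin 2) k) := sub_eq_zero.mp h2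
  simp [e1, e2]
end

section
/- Let k be a field of characteristic 0 and c ∈ k. In k[u, v], set f₂ = u² + v², f₃ = u³ + v³, and f₄ = −u³v − 2c·u²v² − u·v³. Then the pair φ = c·(u + v), ψ = −(c·u² + (1+c)·u·v + c·v²) is the unique pair with φ homogeneous linear and ψ homogeneous quadratic such that f₃·φ + f₂·ψ = f₄. -/
open MvPolynomial

private lemma deg2' (m : Fin 2 →₀ ℕ) : m.degree = m 0 + m 1 := by
  rw [Finsupp.degree_apply, Finset.sum_subset (Finset.subset_univ _)
    (fun i _ hi => Finsupp.notMem_support_iff.mp hi), Fin.sum_univ_two]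

private lemma hom1rep' {k : Type*} [CommSemiring k] (δ : MvPolynomial (Fin 2) k)
    (h : δ.IsHomogeneous 1) : ∃ a b : k, δ = C a * X 0 + C b * X 1 := by
  refine ⟨coeff (Finsupp.single 0 1) δ, coeff (Finsupp.single 1 1) δ, ?_⟩
  ext m
  rw [coeff_add, coeff_C_mul, coeff_C_mul, coeff_X', coeff_X']
  by_cases h0 : Finsupp.single (0 : Fin 2) 1 = m
  · subst h0; norm_num [Finsupp.single_eq_single_iff]
  · by_cases h1 : Finsupp.single (1 : Fin 2) 1 = m
    · subst h1; norm_num [Finsupp.single_eq_single_iff]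
    · rw [if_neg h0, if_neg h1, mul_zero, mul_zero, add_zero]
      refine h.coeff_eq_zero fun hd => ?_
      rw [deg2'] at hd
      rcases Nat.eq_zero_or_pos (m 0) with hz | hp
      · apply h1; ext i; fin_cases i <;> simp_all <;> omega
      · apply h0; ext i; fin_cases i <;> simp_all <;> omega

private lemma hom2rep' {k : Type*} [CommSemiring k] (δ : MvPolynomial (Fin 2) k)
    (h : δ.IsHomogeneous 2) :
    ∃ p q r : k, δ = C p * X 0 ^ 2 + C q * (X 0 * X 1) + C r * X 1 ^ 2 := by
  refine ⟨coeff (Finsupp.single 0 2) δ,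
    coeff (Finsupp.single 0 1 + Finsupp.single 1 1) δ, coeff (Finsupp.single 1 2) δ, ?_⟩
  have e1 : (C (coeff (Finsupp.single 0 2) δ) * X 0 ^ 2 : MvPolynomial (Fin 2) k)
      = monomial (Finsupp.single 0 2) (coeff (Finsupp.single 0 2) δ) := by
    rw [X_pow_eq_monomial, C_mul_monomial, mul_one]
  have e2 : (C (coeff (Finsupp.single 0 1 + Finsupp.single 1 1) δ) * (X 0 * X 1) :
      MvPolynomial (Fin 2) k) = monomial (Finsupp.single 0 1 + Finsupp.single 1 1)
      (coeff (Finsupp.single 0 1 + Finsupp.single 1 1) δ) := by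
    rw [X, X, monomial_mul, C_mul_monomial, mul_one, mul_one]
  have e3 : (C (coeff (Finsupp.single 1 2) δ) * X 1 ^ 2 : MvPolynomial (Fin 2) k)
      = monomial (Finsupp.single 1 2) (coeff (Finsupp.single 1 2) δ) := by
    rw [X_pow_eq_monomial, C_mul_monomial, mul_one]
  rw [e1, e2, e3]
  ext m
  rw [coeff_add, coeff_add, coeff_monomial, coeff_monomial, coeff_monomial]
  by_cases h0 : Finsupp.single (0:Fin 2) 2 = m
  · subst h0
    rw [if_pos rfl,
      if_neg (fun hc => by have := DFunLike.congr_fun hc 1; simp [Finsupp.single_apply] at this),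
      if_neg (fun hc => by have := DFunLike.congr_fun hc 0; simp [Finsupp.single_apply] at this)]
    ring
  · by_cases h1 : Finsupp.single (0:Fin 2) 1 + Finsupp.single (1:Fin 2) 1 = m
    · subst h1
      rw [if_neg h0, if_pos rfl,
        if_neg (fun hc => by have := DFunLike.congr_fun hc 0; simp [Finsupp.single_apply] at this)]
      ring
    · by_cases h2 : Finsupp.single (1:Fin 2) 2 = m
      · subst h2; rw [if_neg h0, if_neg h1, if_pos rfl]; ring
      · rw [if_neg h0, if_neg h1, if_neg h2]
        simp only [add_zero]
        refine h.coeff_eq_zero fun hd => ?_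
        rw [deg2'] at hd
        have hb : m 0 ≤ 2 := by omega
        interval_cases hm : m 0
        · apply h2; ext i; fin_cases i <;> simp_all [Finsupp.single_apply] <;> omega
        · apply h1; ext i; fin_cases i <;> simp_all [Finsupp.single_apply] <;> omega
        · apply h0; ext i; fin_cases i <;> simp_all [Finsupp.single_apply] <;> omega

private lemma luroth_aux (k : Type*) [Field k] [CharZero k] (c : k) :
    ((C c * (X 0 + X 1) : MvPolynomial (Fin 2) k).IsHomogeneous 1 ∧
      (-(C c * X 0 ^ 2 + C (1 + c) * X 0 * X 1 + C c * X 1 ^ 2) :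
        MvPolynomial (Fin 2) k).IsHomogeneous 2 ∧
      (X 0 ^ 3 + X 1 ^ 3 : MvPolynomial (Fin 2) k) * (C c * (X 0 + X 1)) +
        (X 0 ^ 2 + X 1 ^ 2) * (-(C c * X 0 ^ 2 + C (1 + c) * X 0 * X 1 + C c * X 1 ^ 2)) =
        -(X 0 ^ 3 * X 1) - C (2 * c) * X 0 ^ 2 * X 1 ^ 2 - X 0 * X 1 ^ 3) ∧
      ∀ φ ψ : MvPolynomial (Fin 2) k,
        φ.IsHomogeneous 1 → ψ.IsHomogeneous 2 →
        (X 0 ^ 3 + X 1 ^ 3) * φ + (X 0 ^ 2 + X 1 ^ 2) * ψ =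
          -(X 0 ^ 3 * X 1) - C (2 * c) * X 0 ^ 2 * X 1 ^ 2 - X 0 * X 1 ^ 3 →
          φ = C c * (X 0 + X 1) ∧
            ψ = -(C c * X 0 ^ 2 + C (1 + c) * X 0 * X 1 + C c * X 1 ^ 2) := by
  refine ⟨⟨?_, ?_, ?_⟩, ?_⟩
  · exact (isHomogeneous_C _ _).mul ((isHomogeneous_X _ _).add (isHomogeneous_X _ _))
  · exact (((isHomogeneous_C _ c).mul ((isHomogeneous_X _ _).pow 2)).add
      (((isHomogeneous_C _ (1+c)).mul (isHomogeneous_X _ _)).mul (isHomogeneous_X _ _))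
      |>.add ((isHomogeneous_C _ c).mul ((isHomogeneous_X _ _).pow 2))).neg
  · simp only [map_add, map_mul, map_one, map_ofNat]; ring
  · intro φ ψ hφ hψ heq
    obtain ⟨a, b, rfl⟩ := hom1rep' φ hφ
    obtain ⟨p, q, r, rfl⟩ := hom2rep' ψ hψ
    have h1 := congrArg (eval (![1, 0] : Fin 2 → k)) heq
    have h2 := congrArg (eval (![0, 1] : Fin 2 → k)) heq
    have h3 := congrArg (eval (![1, 1] : Fin 2 → k)) heq
    have h4 := congrArg (eval (![1, -1] : Fin 2 → k)) heq
    have h5 := congrArg (eval (![1, 2] : Fin 2 → k)) heq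
    simp [Matrix.cons_val_zero, Matrix.cons_val_one] at h1 h2 h3 h4 h5
    have ha : a = c := by linear_combination (3/2 : k) * h1 - h2 - h3 - h4/6 + h5/6
    have hb : b = c := by linear_combination 2*h1 + 2*h2 - h3/2 - h4/2 - ha
    have hp : p = -c := by linear_combination h1 - ha
    have hr : r = -c := by linear_combination h2 - hb
    have hq : q = -(1 + c) := by linear_combination h3/2 - h1 - h2
    constructor
    · rw [ha, hb]; ring
    · rw [hp, hq, hr]; simp only [map_neg]; ring

/-- For `f₂ = u² + v²`, `f₃ = u³ + v³`, `f₄ = −u³v − 2c·u²v² − uv³` in `k[u,v]`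
(char 0), the pair `φ = c(u+v)`, `ψ = −(cu² + (1+c)uv + cv²)` is the unique pair with
`φ` homogeneous linear and `ψ` homogeneous quadratic such that `f₃φ + f₂ψ = f₄`. -/
theorem luroth_conic_koszul_solution (k : Type*) [Field k] [CharZero k] (c : k) :
    let u : MvPolynomial (Fin 2) k := X 0
    let v : MvPolynomial (Fin 2) k := X 1
    let f₂ := u ^ 2 + v ^ 2
    let f₃ := u ^ 3 + v ^ 3
    let f₄ := -(u ^ 3 * v) - C (2 * c) * u ^ 2 * v ^ 2 - u * v ^ 3
    let φ₀ := C c * (u + v)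
    let ψ₀ := -(C c * u ^ 2 + C (1 + c) * u * v + C c * v ^ 2)
    (φ₀.IsHomogeneous 1 ∧ ψ₀.IsHomogeneous 2 ∧ f₃ * φ₀ + f₂ * ψ₀ = f₄) ∧
      ∀ φ ψ : MvPolynomial (Fin 2) k,
        φ.IsHomogeneous 1 → ψ.IsHomogeneous 2 → f₃ * φ + f₂ * ψ = f₄ →
          φ = φ₀ ∧ ψ = ψ₀ := by
  exact luroth_aux k c
end
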